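/- arXiv:1705.08674 — 2 statements merged into one kernel-verified Lean document; each statement's English description precedes it below -/
import Mathlib

section
/- If G = Q_n(X) is a daisy cube, then D_{G,0^n}(x,y) = D_{G,0^n}(y,x); equivalently, for all integers k, d ≥ 0, the number of induced k-cubes of G at distance d from 0^n equals the number of induced d-cubes of G at distance k from 0^n. -/
def Qcube (n : ℕ) : SimpleGraph (Fin n → Bool) where
  Adj u v := hammingDist u v = 1
  symm := ⟨fun u v h => by rwa [hammingDist_comm]⟩
  loopless := ⟨fun u h => by simp [hammingDist_self] at h⟩

def daisySet {n : ℕ} (X : Set (Fin n → Bool)) : Set (Fin n → Bool) :=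
  {u | ∃ x ∈ X, u ≤ x}

noncomputable def cubeCount {V : Type*} (G : SimpleGraph V) (k : ℕ) : ℕ :=
  Set.ncard {S : Set V | Nonempty (G.induce S ≃g Qcube k)}

noncomputable def distToSet {V : Type*} (G : SimpleGraph V) (u : V) (S : Set V) : ℕ :=
  sInf (G.dist u '' S)

noncomputable def distCubeCount {V : Type*} (G : SimpleGraph V) (u : V) (k d : ℕ) : ℕ :=
  Set.ncard {S : Set V | Nonempty (G.induce S ≃g Qcube k) ∧ distToSet G u S = d}

noncomputable def wCount {V : Type*} (G : SimpleGraph V) (u : V) (d : ℕ) : ℕ :=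
  Set.ncard {v : V | G.dist u v = d}

def interval {V : Type*} (G : SimpleGraph V) (u v : V) : Set V :=
  {w | G.dist u v = G.dist u w + G.dist w v}

namespace DP
variable {n : ℕ}

def wt (v : Fin n → Bool) : ℕ := hammingDist v (fun _ => false)

lemma wt_eq (v : Fin n → Bool) : wt v = (Finset.univ.filter fun i => v i = true).card := by
  unfold wt hammingDist; congr 1; ext i; simp

lemma wt_mono {u v : Fin n → Bool} (h : u ≤ v) : wt u ≤ wt v := by
  rw [wt_eq, wt_eq]
  exact Finset.card_le_card (fun i hi => by
    simp only [Finset.mem_filter] at *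
    exact ⟨hi.1, Bool.le_iff_imp.1 (h i) hi.2⟩)

lemma wt_eq_zero {v : Fin n → Bool} (h : wt v = 0) : v = fun _ => false :=
  eq_of_hammingDist_eq_zero h

lemma daisy_down {X : Set (Fin n → Bool)} {u v : Fin n → Bool} (huv : u ≤ v)
    (hv : v ∈ daisySet X) : u ∈ daisySet X := by
  obtain ⟨x, hx, hvx⟩ := hv
  exact ⟨x, hx, huv.trans hvx⟩

end DP

namespace DP
variable {n : ℕ} {X : Set (Fin n → Bool)}

lemma update_le (v : Fin n → Bool) (i : Fin n) : Function.update v i false ≤ v := by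
  intro j
  by_cases h : j = i
  · subst h; simp
  · rw [Function.update_of_ne h]

lemma hamming_update {v : Fin n → Bool} {i : Fin n} (hv : v i = true) :
    hammingDist v (Function.update v i false) = 1 := by
  unfold hammingDist
  rw [show ({j | v j ≠ Function.update v i false j} : Finset (Fin n)) = {i} from ?_]
  · simp
  · ext j
    simp only [Finset.mem_filter, Finset.mem_univ, true_and, Finset.mem_singleton,
      Finset.mem_insert]
    constructor
    · intro h
      by_contra hj
      rw [Function.update_of_ne hj] at h
      · exact h rfl
    · intro h; subst h; simp [hv]

lemma wt_update {v : Fin n → Bool} {i : Fin n} (hv : v i = true) :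
    wt (Function.update v i false) + 1 = wt v := by
  rw [wt_eq, wt_eq]
  rw [show (Finset.univ.filter fun j => v j = true)
      = insert i (Finset.univ.filter fun j => Function.update v i false j = true) from ?_]
  · rw [Finset.card_insert_of_notMem (by simp)]
  · ext j
    by_cases h : j = i
    · subst h; simp [hv]
    · simp [h, Function.update_of_ne h]

lemma exists_walk (h0 : (fun _ => false) ∈ daisySet X) :
    ∀ (m : ℕ) (v : ↥(daisySet X)), wt (v : Fin n → Bool) = m →
    ∃ p : ((Qcube n).induce (daisySet X)).Walk ⟨fun _ => false, h0⟩ v, p.length = m := by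
  intro m
  induction m with
  | zero =>
    intro v hv
    have : (v : Fin n → Bool) = fun _ => false := wt_eq_zero hv
    have hveq : v = ⟨fun _ => false, h0⟩ := Subtype.ext this
    subst hveq
    exact ⟨SimpleGraph.Walk.nil, rfl⟩
  | succ m ih =>
    intro v hv
    have hne : (v : Fin n → Bool) ≠ fun _ => false := by
      intro h
      have h2 : wt (v : Fin n → Bool) = 0 := by unfold wt; rw [h]; exact hammingDist_self _
      omega
    obtain ⟨i, hi⟩ : ∃ i, (v : Fin n → Bool) i = true := by
      by_contra h
      push_neg at h
      exact hne (funext fun i => by simpa using h i)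
    set v' : Fin n → Bool := Function.update ↑v i false with hv'
    have hv'mem : v' ∈ daisySet X := daisy_down (update_le _ _) v.2
    have hwt : wt v' = m := by
      rw [hv']
      have := wt_update (v := (v : Fin n → Bool)) hi
      omega
    obtain ⟨p, hp⟩ := ih ⟨v', hv'mem⟩ hwt
    have hadj : ((Qcube n).induce (daisySet X)).Adj ⟨v', hv'mem⟩ v := by
      show hammingDist v' ↑v = 1
      rw [hammingDist_comm]
      exact hamming_update hi
    exact ⟨p.concat hadj, by rw [SimpleGraph.Walk.length_concat, hp]⟩

lemma walk_length_ge {a b : ↥(daisySet X)} (p : ((Qcube n).induce (daisySet X)).Walk a b) :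
    hammingDist (a : Fin n → Bool) ↑b ≤ p.length := by
  induction p with
  | nil => simp [hammingDist_self]
  | cons h p ih =>
    rename_i u v w
    have h1 : hammingDist (u : Fin n → Bool) ↑v = 1 := h
    calc hammingDist (u : Fin n → Bool) ↑w ≤ hammingDist (u : Fin n → Bool) ↑v + hammingDist (v : Fin n → Bool) ↑w :=
      hammingDist_triangle _ _ _
    _ ≤ 1 + p.length := by rw [h1]; omega
    _ = (SimpleGraph.Walk.cons h p).length := by rw [SimpleGraph.Walk.length_cons]; omega

lemma dist_eq_wt (h0 : (fun _ => false) ∈ daisySet X) (v : ↥(daisySet X)) :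
    ((Qcube n).induce (daisySet X)).dist ⟨fun _ => false, h0⟩ v = wt (v : Fin n → Bool) := by
  obtain ⟨p, hp⟩ := exists_walk h0 (wt (v : Fin n → Bool)) v rfl
  refine le_antisymm (hp ▸ SimpleGraph.dist_le p) ?_
  obtain ⟨q, hq⟩ := SimpleGraph.Reachable.exists_walk_length_eq_dist ⟨p⟩
  have h3 : wt (v : Fin n → Bool) = hammingDist (fun _ => false) (v : Fin n → Bool) :=
    hammingDist_comm _ _
  rw [h3, ← hq]
  exact walk_length_ge q

end DP

namespace DP
variable {n : ℕ}

def diffFinset (u v : Fin n → Bool) : Finset (Fin n) :=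
  Finset.univ.filter fun j => u j ≠ v j

lemma hammingDist_eq_card (u v : Fin n → Bool) : hammingDist u v = (diffFinset u v).card := rfl

noncomputable def diffIdx (u v : Fin n → Bool) (h : hammingDist u v = 1) : Fin n :=
  (Finset.card_eq_one.mp (by rwa [hammingDist_eq_card] at h)).choose

lemma diffIdx_spec {u v : Fin n → Bool} (h : hammingDist u v = 1) :
    diffFinset u v = {diffIdx u v h} :=
  Exists.choose_spec (Finset.card_eq_one.mp (by rwa [hammingDist_eq_card] at h))

lemma ne_iff_eq_diffIdx {u v : Fin n → Bool} (h : hammingDist u v = 1) {j : Fin n} :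
    u j ≠ v j ↔ j = diffIdx u v h := by
  have hs := diffIdx_spec h
  constructor
  · intro hj
    have : j ∈ diffFinset u v := by simp [diffFinset, hj]
    rw [hs, Finset.mem_singleton] at this
    exact this
  · intro hj
    have : j ∈ diffFinset u v := by rw [hs, Finset.mem_singleton]; exact hj
    simpa [diffFinset] using this

lemma diffIdx_mem {u v : Fin n → Bool} (h : hammingDist u v = 1) :
    u (diffIdx u v h) ≠ v (diffIdx u v h) :=
  (ne_iff_eq_diffIdx h).mpr rfl

lemma bool_flip_of_ne {a b : Bool} (h : a ≠ b) : b = !a := by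
  cases a <;> cases b <;> simp_all

lemma eq_update_diffIdx {u v : Fin n → Bool} (h : hammingDist u v = 1) :
    v = Function.update u (diffIdx u v h) (!(u (diffIdx u v h))) := by
  funext j
  by_cases hj : j = diffIdx u v h
  · subst hj
    rw [Function.update_self]
    exact bool_flip_of_ne (diffIdx_mem h)
  · rw [Function.update_of_ne hj]
    have : ¬(u j ≠ v j) := fun hne => hj ((ne_iff_eq_diffIdx h).mp hne)
    exact (not_ne_iff.mp this).symm

end DP

namespace DP
variable {k : ℕ}

def flip (x : Fin k → Bool) (i : Fin k) : Fin k → Bool := Function.update x i (!(x i))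

lemma flip_apply_same (x : Fin k → Bool) (i : Fin k) : flip x i i = !(x i) :=
  Function.update_self _ _ _

lemma flip_apply_ne (x : Fin k → Bool) {i j : Fin k} (h : j ≠ i) : flip x i j = x j :=
  Function.update_of_ne h _ _

lemma flip_ne (x : Fin k → Bool) (i : Fin k) : flip x i ≠ x := by
  intro h
  have := congrFun h i
  rw [flip_apply_same] at this
  cases hx : x i <;> rw [hx] at this <;> simp at this

lemma flip_flip (x : Fin k → Bool) (i : Fin k) : flip (flip x i) i = x := by
  funext j
  by_cases hj : j = i
  · subst hj
    rw [flip_apply_same, flip_apply_same]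
    simp
  · rw [flip_apply_ne _ hj, flip_apply_ne _ hj]

lemma flip_comm (x : Fin k → Bool) {i j : Fin k} (h : i ≠ j) :
    flip (flip x i) j = flip (flip x j) i := by
  funext m
  by_cases hmi : m = i
  · subst hmi
    have l1 : flip (flip x m) j m = flip x m m := flip_apply_ne _ h
    have l2 : flip (flip x j) m m = !((flip x j) m) := flip_apply_same _ _
    have l3 : (flip x j) m = x m := flip_apply_ne _ h
    rw [l1, l2, l3, flip_apply_same]
  · by_cases hmj : m = j
    · subst hmj
      have l1 : flip (flip x i) m m = !((flip x i) m) := flip_apply_same _ _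
      have l2 : (flip x i) m = x m := flip_apply_ne _ h.symm
      have l3 : flip (flip x m) i m = flip x m m := flip_apply_ne _ h.symm
      rw [l1, l2, l3, flip_apply_same]
    · rw [flip_apply_ne _ hmj, flip_apply_ne _ hmi, flip_apply_ne _ hmi, flip_apply_ne _ hmj]

lemma hamming_flip (x : Fin k → Bool) (i : Fin k) : hammingDist x (flip x i) = 1 := by
  rw [hammingDist_eq_card]
  rw [show diffFinset x (flip x i) = {i} from ?_]
  · simp
  · ext j
    simp only [diffFinset, Finset.mem_filter, Finset.mem_univ, true_and, Finset.mem_singleton]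
    constructor
    · intro hj
      by_contra hji
      rw [flip_apply_ne _ hji] at hj
      exact hj rfl
    · intro hj
      subst hj
      rw [flip_apply_same]
      cases x j <;> simp

lemma wt_flip_true {x : Fin k → Bool} {i : Fin k} (h : x i = true) :
    wt (flip x i) + 1 = wt x := by
  have : flip x i = Function.update x i false := by unfold flip; rw [h]; rfl
  rw [this]
  exact wt_update h

end DP

namespace DP

section Classify
variable {n k : ℕ} {φ : (Fin k → Bool) → (Fin n → Bool)}

lemma hphi (hadj : ∀ x y, hammingDist (φ x) (φ y) = 1 ↔ hammingDist x y = 1)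
    (x : Fin k → Bool) (i : Fin k) : hammingDist (φ x) (φ (flip x i)) = 1 :=
  (hadj _ _).mpr (hamming_flip x i)

noncomputable def dcf (hadj : ∀ x y, hammingDist (φ x) (φ y) = 1 ↔ hammingDist x y = 1)
    (x : Fin k → Bool) (i : Fin k) : Fin n :=
  diffIdx (φ x) (φ (flip x i)) (hphi hadj x i)

variable (hadj : ∀ x y, hammingDist (φ x) (φ y) = 1 ↔ hammingDist x y = 1)

lemma phi_flip_eq (x : Fin k → Bool) (i : Fin k) :
    φ (flip x i) = Function.update (φ x) (dcf hadj x i) (!(φ x (dcf hadj x i))) :=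
  eq_update_diffIdx (hphi hadj x i)

lemma dcf_flip_self (x : Fin k → Bool) (i : Fin k) :
    dcf hadj x i = dcf hadj (flip x i) i := by
  apply (ne_iff_eq_diffIdx (hphi hadj (flip x i) i)).mp
  rw [flip_flip]
  exact (diffIdx_mem (hphi hadj x i)).symm

lemma dcf_square (hinj : Function.Injective φ) {x : Fin k → Bool} {i j : Fin k} (hij : i ≠ j) :
    dcf hadj x i = dcf hadj (flip x j) i := by
  set a := dcf hadj x i with ha
  set d := dcf hadj x j with hd
  set c := dcf hadj (flip x j) i with hc
  set b := dcf hadj (flip x i) j with hb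
  have ea : φ (flip x i) = Function.update (φ x) a (!(φ x a)) := phi_flip_eq hadj x i
  have ed : φ (flip x j) = Function.update (φ x) d (!(φ x d)) := phi_flip_eq hadj x j
  have eb : φ (flip (flip x i) j) = Function.update (φ (flip x i)) b (!(φ (flip x i) b)) :=
    phi_flip_eq hadj (flip x i) j
  have ec : φ (flip (flip x j) i) = Function.update (φ (flip x j)) c (!(φ (flip x j) c)) :=
    phi_flip_eq hadj (flip x j) i
  -- a ≠ d
  have had : a ≠ d := by
    intro h
    have : φ (flip x i) = φ (flip x j) := by rw [ea, ed, h]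
    have h2 : flip x i = flip x j := hinj this
    have := congrFun h2 i
    rw [flip_apply_same, flip_apply_ne _ hij] at this
    cases hx : x i <;> rw [hx] at this <;> simp at this
  -- a ≠ b
  have hab : a ≠ b := by
    intro h
    have : φ (flip (flip x i) j) = φ x := by
      rw [eb, ea, ← h, Function.update_idem, Function.update_self]
      simp
    have h2 : flip (flip x i) j = x := hinj this
    have := congrFun h2 j
    rw [flip_apply_same, flip_apply_ne _ (Ne.symm hij)] at this
    cases hx : x j <;> rw [hx] at this <;> simp at this
  -- c ≠ d
  have hcd : c ≠ d := by
    intro h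
    have : φ (flip (flip x j) i) = φ x := by
      rw [ec, ed, h, Function.update_idem, Function.update_self]
      simp
    have h2 : flip (flip x j) i = x := hinj this
    have := congrFun h2 i
    rw [flip_apply_same, flip_apply_ne _ hij] at this
    cases hx : x i <;> rw [hx] at this <;> simp at this
  -- evaluate φ (flip (flip x i) j) at a in two ways
  by_contra hac
  have hval1 : φ (flip (flip x i) j) a = !(φ x a) := by
    rw [eb, Function.update_of_ne (Ne.symm (fun h => hab h.symm)), ea, Function.update_self]
  have hval2 : φ (flip (flip x i) j) a = φ x a := by
    rw [flip_comm _ hij, ec, Function.update_of_ne (fun h => hac (hc ▸ h)), ed,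
      Function.update_of_ne had]
  rw [hval1] at hval2
  cases hx : φ x a <;> rw [hx] at hval2 <;> simp at hval2

end Classify
end DP

namespace DP
section Classify2
variable {n k : ℕ} {φ : (Fin k → Bool) → (Fin n → Bool)}
variable (hadj : ∀ x y, hammingDist (φ x) (φ y) = 1 ↔ hammingDist x y = 1)

lemma exists_true_of_wt_pos {x : Fin k → Bool} (h : x ≠ fun _ => false) :
    ∃ i, x i = true := by
  by_contra hc
  push_neg at hc
  exact h (funext fun i => by simpa using hc i)

lemma dcf_const (hinj : Function.Injective φ) :
    ∀ (m : ℕ) (x : Fin k → Bool), wt x ≤ m → ∀ i, dcf hadj x i = dcf hadj (fun _ => false) i := by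
  intro m
  induction m with
  | zero =>
    intro x hx i
    have : x = fun _ => false := wt_eq_zero (Nat.le_zero.mp hx)
    rw [this]
  | succ m ih =>
    intro x hx i
    by_cases hz : x = fun _ => false
    · rw [hz]
    · by_cases hxi : x i = true
      · rw [dcf_flip_self hadj x i]
        have hwt : wt (flip x i) ≤ m := by
          have := wt_flip_true hxi
          omega
        exact ih (flip x i) hwt i
      · obtain ⟨j, hj⟩ := exists_true_of_wt_pos hz
        have hij : i ≠ j := fun h => hxi (h ▸ hj)
        rw [dcf_square hadj hinj hij]
        have hwt : wt (flip x j) ≤ m := by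
          have := wt_flip_true hj
          omega
        exact ih (flip x j) hwt i

noncomputable def sigf (hadj : ∀ x y, hammingDist (φ x) (φ y) = 1 ↔ hammingDist x y = 1)
    (i : Fin k) : Fin n :=
  dcf hadj (fun _ => false) i

lemma dcf_eq_sigf (hinj : Function.Injective φ) (x : Fin k → Bool) (i : Fin k) :
    dcf hadj x i = sigf hadj i :=
  dcf_const hadj hinj (wt x) x le_rfl i

lemma sigf_inj (hinj : Function.Injective φ) : Function.Injective (sigf hadj) := by
  intro i i' h
  have e1 : φ (flip (fun _ => false) i) =
      Function.update (φ fun _ => false) (sigf hadj i) (!(φ (fun _ => false) (sigf hadj i))) :=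
    phi_flip_eq hadj _ i
  have e2 : φ (flip (fun _ => false) i') =
      Function.update (φ fun _ => false) (sigf hadj i') (!(φ (fun _ => false) (sigf hadj i'))) :=
    phi_flip_eq hadj _ i'
  have : φ (flip (fun _ => false) i) = φ (flip (fun _ => false) i') := by rw [e1, e2, h]
  have h2 := hinj this
  by_contra hii
  have := congrFun h2 i
  rw [flip_apply_same, flip_apply_ne _ hii] at this
  simp at this

/-- The coordinate set of the subcube. -/
noncomputable def Kf (hadj : ∀ x y, hammingDist (φ x) (φ y) = 1 ↔ hammingDist x y = 1) :
    Finset (Fin n) :=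
  Finset.univ.image (sigf hadj)

lemma phi_formula (hinj : Function.Injective φ) :
    ∀ (m : ℕ) (x : Fin k → Bool), wt x ≤ m →
      (∀ j, j ∉ Kf hadj → φ x j = φ (fun _ => false) j) ∧
      (∀ i, φ x (sigf hadj i) = xor (x i) (φ (fun _ => false) (sigf hadj i))) := by
  intro m
  induction m with
  | zero =>
    intro x hx
    have hz : x = fun _ => false := wt_eq_zero (Nat.le_zero.mp hx)
    subst hz
    exact ⟨fun j _ => rfl, fun i => by simp⟩
  | succ m ih =>
    intro x hx
    by_cases hz : x = fun _ => false
    · subst hz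
      exact ⟨fun j _ => rfl, fun i => by simp⟩
    · obtain ⟨i0, hi0⟩ := exists_true_of_wt_pos hz
      set x' := flip x i0 with hx'
      have hwt : wt x' ≤ m := by
        rw [hx']
        have := wt_flip_true hi0
        omega
      obtain ⟨iha, ihb⟩ := ih x' hwt
      have hxx' : x = flip x' i0 := (flip_flip x i0).symm
      have heq : φ x = Function.update (φ x') (sigf hadj i0) (!(φ x' (sigf hadj i0))) := by
        rw [← dcf_eq_sigf hadj hinj x' i0]
        rw [hxx']
        exact phi_flip_eq hadj x' i0
      constructor
      · intro j hj
        have hjs : j ≠ sigf hadj i0 := by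
          intro h
          exact hj (h ▸ Finset.mem_image_of_mem _ (Finset.mem_univ i0))
        rw [heq, Function.update_of_ne hjs]
        exact iha j hj
      · intro i
        by_cases hii : i = i0
        · subst hii
          rw [heq, Function.update_self, ihb i]
          have hx'i : x' i = false := by rw [hx', flip_apply_same, hi0]; rfl
          rw [hx'i, hi0]
          cases φ (fun _ => false) (sigf hadj i) <;> rfl
        · have hss : sigf hadj i ≠ sigf hadj i0 := fun h => hii (sigf_inj hadj hinj h)
          rw [heq, Function.update_of_ne hss, ihb i]
          have : x' i = x i := by rw [hx', flip_apply_ne _ hii]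
          rw [this]

end Classify2
end DP

namespace DP

lemma xor_xor_cancel (a b : Bool) : xor (xor a b) b = a := by cases a <;> cases b <;> rfl

section Classify3
variable {n k : ℕ} {φ : (Fin k → Bool) → (Fin n → Bool)}

lemma classify (hinj : Function.Injective φ)
    (hadj : ∀ x y, hammingDist (φ x) (φ y) = 1 ↔ hammingDist x y = 1) :
    ∃ b t : Fin n → Bool, b ≤ t ∧ hammingDist b t = k ∧ Set.range φ = Set.Icc b t := by
  classical
  refine ⟨fun j => if j ∈ Kf hadj then false else φ (fun _ => false) j,
    fun j => if j ∈ Kf hadj then true else φ (fun _ => false) j, ?_, ?_, ?_⟩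
  · intro j
    by_cases hj : j ∈ Kf hadj <;> simp [hj]
  · rw [hammingDist_eq_card]
    rw [show diffFinset (fun j => if j ∈ Kf hadj then false else φ (fun _ => false) j)
        (fun j => if j ∈ Kf hadj then true else φ (fun _ => false) j) = Kf hadj from ?_]
    · rw [Kf, Finset.card_image_of_injective _ (sigf_inj hadj hinj), Finset.card_univ,
        Fintype.card_fin]
    · ext j
      simp only [diffFinset, Finset.mem_filter, Finset.mem_univ, true_and]
      by_cases hj : j ∈ Kf hadj <;> simp [hj]
  · ext u
    simp only [Set.mem_range, Set.mem_Icc]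
    constructor
    · rintro ⟨x, rfl⟩
      obtain ⟨ha, hb⟩ := phi_formula hadj hinj (wt x) x le_rfl
      constructor
      · intro j
        by_cases hj : j ∈ Kf hadj
        · simp only [hj, if_true]
          exact Bool.false_le _
        · simp only [hj, if_false]
          rw [ha j hj]
      · intro j
        by_cases hj : j ∈ Kf hadj
        · simp only [hj, if_true]
          exact Bool.le_true _
        · simp only [hj, if_false]
          rw [ha j hj]
    · rintro ⟨hbu, hut⟩
      refine ⟨fun i => xor (u (sigf hadj i)) (φ (fun _ => false) (sigf hadj i)), ?_⟩
      obtain ⟨ha, hb⟩ := phi_formula hadj hinj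
        (wt (fun i => xor (u (sigf hadj i)) (φ (fun _ => false) (sigf hadj i)))) _ le_rfl
      funext j
      by_cases hj : j ∈ Kf hadj
      · obtain ⟨i, _, hi⟩ := Finset.mem_image.mp hj
        subst hi
        rw [hb i, xor_xor_cancel]
      · rw [ha j hj]
        have h1 := hbu j
        have h2 := hut j
        simp only [hj, if_false] at h1 h2
        exact le_antisymm h1 h2
end Classify3
end DP

namespace DP

lemma bool_le_ne {a b : Bool} (h1 : a ≤ b) (h2 : a ≠ b) : a = false ∧ b = true := by
  revert h1 h2
  cases a <;> cases b <;> decide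

lemma cube_of_interval {n m : ℕ} {b t : Fin n → Bool} (hbt : b ≤ t) (hm : hammingDist b t = m) :
    ∃ φ : (Fin m → Bool) → (Fin n → Bool), Function.Injective φ ∧
      (∀ x y, hammingDist (φ x) (φ y) = hammingDist x y) ∧ Set.range φ = Set.Icc b t := by
  classical
  set K : Finset (Fin n) := diffFinset b t with hK
  have hcard : Fintype.card ↥K = m := by rw [Fintype.card_coe, ← hammingDist_eq_card, hm]
  set e : Fin m ≃ ↥K := (Fintype.equivFinOfCardEq hcard).symm with he
  set φ : (Fin m → Bool) → (Fin n → Bool) :=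
    fun x j => if h : j ∈ K then x (e.symm ⟨j, h⟩) else b j with hφ
  have hdist : ∀ x y, hammingDist (φ x) (φ y) = hammingDist x y := by
    intro x y
    rw [hammingDist_eq_card, hammingDist_eq_card]
    have himg : diffFinset (φ x) (φ y) =
        (diffFinset x y).image (fun i => ((e i : ↥K) : Fin n)) := by
      ext j
      simp only [diffFinset, Finset.mem_filter, Finset.mem_univ, true_and, Finset.mem_image]
      by_cases hj : j ∈ K
      · constructor
        · intro hne
          refine ⟨e.symm ⟨j, hj⟩, ?_, ?_⟩
          · simp only [hφ, hj, dif_pos] at hne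
            exact hne
          · rw [Equiv.apply_symm_apply]
        · rintro ⟨i, hi, rfl⟩
          simp only [hφ, (e i).2, dif_pos]
          rw [show (⟨((e i : ↥K) : Fin n), (e i).2⟩ : ↥K) = e i from Subtype.ext rfl,
            Equiv.symm_apply_apply]
          exact hi
      · constructor
        · intro hne
          exact absurd rfl (by simp only [hφ, hj, dif_neg, not_false_iff] at hne; exact hne)
        · rintro ⟨i, hi, hij⟩
          exact absurd (hij ▸ (e i).2) hj
    rw [himg, Finset.card_image_of_injective _ (fun i i' h =>
      e.injective (Subtype.ext h))]
  have hinj : Function.Injective φ := by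
    intro x y h
    have : hammingDist x y = 0 := by rw [← hdist, h, hammingDist_self]
    exact eq_of_hammingDist_eq_zero this
  refine ⟨φ, hinj, hdist, ?_⟩
  ext u
  simp only [Set.mem_range, Set.mem_Icc]
  constructor
  · rintro ⟨x, rfl⟩
    constructor
    · intro j
      by_cases hj : j ∈ K
      · have := bool_le_ne (hbt j) (by simpa [hK, diffFinset] using hj)
        simp only [hφ, hj, dif_pos]
        rw [this.1]
        exact Bool.false_le _
      · simp only [hφ, hj, dif_neg, not_false_iff]
        exact le_rfl
    · intro j
      by_cases hj : j ∈ K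
      · have := bool_le_ne (hbt j) (by simpa [hK, diffFinset] using hj)
        simp only [hφ, hj, dif_pos]
        rw [this.2]
        exact Bool.le_true _
      · simp only [hφ, hj, dif_neg, not_false_iff]
        have : b j = t j := by
          by_contra hne
          exact hj (by simp [hK, diffFinset, hne])
        rw [this]
  · rintro ⟨hbu, hut⟩
    refine ⟨fun i => u ((e i : ↥K) : Fin n), ?_⟩
    funext j
    by_cases hj : j ∈ K
    · simp only [hφ, hj, dif_pos]
      rw [Equiv.apply_symm_apply]
    · simp only [hφ, hj, dif_neg, not_false_iff]
      have : b j = t j := by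
        by_contra hne
        exact hj (by simp [hK, diffFinset, hne])
      exact le_antisymm (hbu j) (by rw [this]; exact hut j)
end DP

namespace DP
variable {n : ℕ} {X : Set (Fin n → Bool)}

lemma mem_of_val_mem {D : Set (Fin n → Bool)} {S : Set ↥D} {v : ↥D}
    (h : (v : Fin n → Bool) ∈ Subtype.val '' S) : v ∈ S := by
  obtain ⟨w, hw, hwv⟩ := h
  rwa [show w = v from Subtype.ext hwv] at hw

lemma sInf_wt_Icc {b t : Fin n → Bool} (hbt : b ≤ t) :
    sInf (wt '' Set.Icc b t) = wt b := by
  refine le_antisymm (Nat.sInf_le ⟨b, ⟨le_rfl, hbt⟩, rfl⟩) ?_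
  refine le_csInf ⟨wt b, b, ⟨le_rfl, hbt⟩, rfl⟩ ?_
  rintro y ⟨u, ⟨hbu, _⟩, rfl⟩
  exact wt_mono hbu

lemma distToSet_eq (h0 : (fun _ => false) ∈ daisySet X) (S : Set ↥(daisySet X)) :
    distToSet ((Qcube n).induce (daisySet X)) ⟨fun _ => false, h0⟩ S
      = sInf (wt '' (Subtype.val '' S)) := by
  unfold distToSet
  congr 1
  rw [Set.image_image]
  exact Set.image_congr fun v _ => dist_eq_wt h0 v

lemma setP_iff (h0 : (fun _ => false) ∈ daisySet X) (k d : ℕ) (S : Set ↥(daisySet X)) :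
    (Nonempty (((Qcube n).induce (daisySet X)).induce S ≃g Qcube k) ∧
      distToSet ((Qcube n).induce (daisySet X)) ⟨fun _ => false, h0⟩ S = d) ↔
    ∃ b t : Fin n → Bool, b ≤ t ∧ t ∈ daisySet X ∧ Subtype.val '' S = Set.Icc b t ∧
      hammingDist b t = k ∧ wt b = d := by
  constructor
  · rintro ⟨⟨ψ⟩, hdist⟩
    set φ : (Fin k → Bool) → (Fin n → Bool) :=
      fun x => ((ψ.symm x : ↥(daisySet X)) : Fin n → Bool) with hφ
    have hinj : Function.Injective φ := by
      intro x y h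
      exact ψ.symm.injective (Subtype.ext (Subtype.ext h))
    have hadj : ∀ x y, hammingDist (φ x) (φ y) = 1 ↔ hammingDist x y = 1 := by
      intro x y
      constructor
      · intro h
        exact ψ.symm.map_rel_iff.mp h
      · intro h
        exact ψ.symm.map_rel_iff.mpr h
    have hrange : Set.range φ = Subtype.val '' S := by
      ext u
      constructor
      · rintro ⟨x, rfl⟩
        exact ⟨↑(ψ.symm x), (ψ.symm x).2, rfl⟩
      · rintro ⟨v, hv, rfl⟩
        refine ⟨ψ ⟨v, hv⟩, ?_⟩
        show ((ψ.symm (ψ ⟨v, hv⟩) : ↥(daisySet X)) : Fin n → Bool) = ↑v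
        rw [ψ.symm_apply_apply]
    obtain ⟨b, t, hbt, hk, hIcc⟩ := classify hinj hadj
    rw [hrange] at hIcc
    have htS : t ∈ Subtype.val '' S := by rw [hIcc]; exact ⟨hbt, le_rfl⟩
    have htD : t ∈ daisySet X := by
      obtain ⟨v, _, hv⟩ := htS
      exact hv ▸ v.2
    refine ⟨b, t, hbt, htD, hIcc, hk, ?_⟩
    rw [distToSet_eq h0, hIcc, sInf_wt_Icc hbt] at hdist
    exact hdist
  · rintro ⟨b, t, hbt, htD, hIcc, hk, hd⟩
    obtain ⟨φ, hinj, hdist, hrange⟩ := cube_of_interval hbt hk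
    have hmemD : ∀ x, φ x ∈ daisySet X := by
      intro x
      have : φ x ∈ Set.Icc b t := by rw [← hrange]; exact Set.mem_range_self x
      exact daisy_down this.2 htD
    have hmemS : ∀ x, (⟨φ x, hmemD x⟩ : ↥(daisySet X)) ∈ S := by
      intro x
      apply mem_of_val_mem
      rw [hIcc]
      show φ x ∈ Set.Icc b t
      rw [← hrange]
      exact Set.mem_range_self x
    set f : (Fin k → Bool) → ↥S := fun x => ⟨⟨φ x, hmemD x⟩, hmemS x⟩ with hf
    have hbij : Function.Bijective f := by
      constructor
      · intro x y h
        exact hinj (congrArg (fun v : ↥S => ((v : ↥(daisySet X)) : Fin n → Bool)) h)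
      · intro v
        have : ((v : ↥(daisySet X)) : Fin n → Bool) ∈ Set.range φ := by
          rw [hrange, ← hIcc]
          exact ⟨↑v, v.2, rfl⟩
        obtain ⟨x, hx⟩ := this
        exact ⟨x, Subtype.ext (Subtype.ext hx)⟩
    refine ⟨⟨(SimpleGraph.Iso.symm ⟨Equiv.ofBijective f hbij, ?_⟩ :
        (((Qcube n).induce (daisySet X)).induce S) ≃g Qcube k)⟩, ?_⟩
    · intro a b
      show hammingDist (φ a) (φ b) = 1 ↔ hammingDist a b = 1
      rw [hdist]
    · rw [distToSet_eq h0, hIcc, sInf_wt_Icc hbt, hd]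
end DP

namespace DP
variable {n : ℕ} {X : Set (Fin n → Bool)}

open Classical in
noncomputable def supS (D : Set (Fin n → Bool)) (S : Set ↥D) : Fin n → Bool :=
  fun j => decide (∃ v ∈ S, (v : Fin n → Bool) j = true)

open Classical in
noncomputable def infS (D : Set (Fin n → Bool)) (S : Set ↥D) : Fin n → Bool :=
  fun j => decide (∀ v ∈ S, (v : Fin n → Bool) j = true)

noncomputable def Fmap (D : Set (Fin n → Bool)) (S : Set ↥D) : Set ↥D :=
  {v | (fun j => supS D S j && !(infS D S j)) ≤ (v : Fin n → Bool) ∧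
    (v : Fin n → Bool) ≤ supS D S}

variable {D : Set (Fin n → Bool)}

lemma supS_eq {S : Set ↥D} {b t : Fin n → Bool} (hbt : b ≤ t)
    (hIcc : Subtype.val '' S = Set.Icc b t) : supS D S = t := by
  funext j
  unfold supS
  cases ht : t j
  · simp only [decide_eq_false_iff_not]
    rintro ⟨v, hvS, hvj⟩
    have : (v : Fin n → Bool) ∈ Set.Icc b t := by rw [← hIcc]; exact ⟨v, hvS, rfl⟩
    have h2 := this.2 j
    rw [hvj, ht] at h2
    exact Bool.false_ne_true (Bool.le_iff_imp.mp h2 rfl)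
  · simp only [decide_eq_true_eq]
    have : t ∈ Subtype.val '' S := by rw [hIcc]; exact ⟨hbt, le_rfl⟩
    obtain ⟨v, hvS, hvt⟩ := this
    exact ⟨v, hvS, by rw [hvt, ht]⟩

lemma infS_eq {S : Set ↥D} {b t : Fin n → Bool} (hbt : b ≤ t)
    (hIcc : Subtype.val '' S = Set.Icc b t) : infS D S = b := by
  funext j
  unfold infS
  cases hb : b j
  · simp only [decide_eq_false_iff_not]
    intro hall
    have : b ∈ Subtype.val '' S := by rw [hIcc]; exact ⟨le_rfl, hbt⟩
    obtain ⟨v, hvS, hvb⟩ := this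
    have := hall v hvS
    rw [hvb, hb] at this
    exact Bool.false_ne_true this
  · simp only [decide_eq_true_eq]
    intro v hvS
    have : (v : Fin n → Bool) ∈ Set.Icc b t := by rw [← hIcc]; exact ⟨v, hvS, rfl⟩
    exact Bool.le_iff_imp.mp (this.1 j) hb

lemma mem_S_iff {S : Set ↥D} {b t : Fin n → Bool}
    (hIcc : Subtype.val '' S = Set.Icc b t) (v : ↥D) :
    v ∈ S ↔ (v : Fin n → Bool) ∈ Set.Icc b t := by
  rw [← hIcc]
  exact ⟨fun h => ⟨v, h, rfl⟩, mem_of_val_mem⟩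

lemma Fmap_eq {S : Set ↥D} {b t : Fin n → Bool} (hbt : b ≤ t)
    (hIcc : Subtype.val '' S = Set.Icc b t) :
    Fmap D S = {v : ↥D | (v : Fin n → Bool) ∈ Set.Icc (fun j => t j && !(b j)) t} := by
  unfold Fmap
  rw [supS_eq hbt hIcc, infS_eq hbt hIcc]
  rfl

lemma bool1 : ∀ a b : Bool, (a && !b) ≤ a := by decide
lemma bool2 : ∀ a b : Bool, b ≤ a → ((a && !b) ≠ a ↔ b = true) := by decide
lemma bool3 : ∀ a b : Bool, b ≤ a → ((a && !b) = true ↔ b ≠ a) := by decide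
lemma bool4 : ∀ a b : Bool, b ≤ a → (a && !(a && !b)) = b := by decide

lemma bswap_le (b t : Fin n → Bool) : (fun j => t j && !(b j)) ≤ t :=
  fun j => bool1 (t j) (b j)

lemma bswap_hd {b t : Fin n → Bool} (hbt : b ≤ t) :
    hammingDist (fun j => t j && !(b j)) t = wt b := by
  rw [hammingDist_eq_card, wt_eq, diffFinset]
  congr 1
  ext j
  simp only [Finset.mem_filter, Finset.mem_univ, true_and]
  exact bool2 (t j) (b j) (hbt j)

lemma bswap_wt {b t : Fin n → Bool} (hbt : b ≤ t) :
    wt (fun j => t j && !(b j)) = hammingDist b t := by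
  rw [hammingDist_eq_card, wt_eq, diffFinset]
  congr 1
  ext j
  simp only [Finset.mem_filter, Finset.mem_univ, true_and]
  rw [bool3 (t j) (b j) (hbt j)]

lemma bswap_bswap {b t : Fin n → Bool} (hbt : b ≤ t) :
    (fun j => t j && !((fun j' => t j' && !(b j')) j)) = b := by
  funext j
  exact bool4 (t j) (b j) (hbt j)

lemma val_image_Fmap {X : Set (Fin n → Bool)} {S : Set ↥(daisySet X)} {b t : Fin n → Bool}
    (hbt : b ≤ t) (htD : t ∈ daisySet X)
    (hIcc : Subtype.val '' S = Set.Icc b t) :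
    Subtype.val '' (Fmap (daisySet X) S) = Set.Icc (fun j => t j && !(b j)) t := by
  rw [Fmap_eq hbt hIcc]
  ext u
  constructor
  · rintro ⟨v, hv, rfl⟩
    exact hv
  · intro hu
    exact ⟨⟨u, daisy_down hu.2 htD⟩, hu, rfl⟩
end DP

namespace DP

def Akd {n : ℕ} (X : Set (Fin n → Bool)) (k d : ℕ) : Set (Set ↥(daisySet X)) :=
  {S | ∃ b t : Fin n → Bool, b ≤ t ∧ t ∈ daisySet X ∧ Subtype.val '' S = Set.Icc b t ∧
    hammingDist b t = k ∧ wt b = d}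

lemma Fmap_maps {n : ℕ} {X : Set (Fin n → Bool)} {k d : ℕ} {S : Set ↥(daisySet X)}
    (h : S ∈ Akd X k d) : Fmap (daisySet X) S ∈ Akd X d k := by
  obtain ⟨b, t, hbt, htD, hIcc, hk, hd⟩ := h
  exact ⟨fun j => t j && !(b j), t, bswap_le b t, htD, val_image_Fmap hbt htD hIcc,
    by rw [bswap_hd hbt, hd], by rw [bswap_wt hbt, hk]⟩

lemma Fmap_invol {n : ℕ} {X : Set (Fin n → Bool)} {k d : ℕ} {S : Set ↥(daisySet X)}
    (h : S ∈ Akd X k d) : Fmap (daisySet X) (Fmap (daisySet X) S) = S := by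
  obtain ⟨b, t, hbt, htD, hIcc, hk, hd⟩ := h
  have h1 : Subtype.val '' (Fmap (daisySet X) S) = Set.Icc (fun j => t j && !(b j)) t :=
    val_image_Fmap hbt htD hIcc
  rw [Fmap_eq (bswap_le b t) h1, bswap_bswap hbt]
  ext v
  rw [Set.mem_setOf_eq, ← mem_S_iff hIcc v]

end DP

theorem distCubeCount_daisy_symm (n : ℕ) (X : Set (Fin n → Bool))
    (h0 : (fun _ => false) ∈ daisySet X) (k d : ℕ) :
    distCubeCount ((Qcube n).induce (daisySet X)) ⟨fun _ => false, h0⟩ k d =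
    distCubeCount ((Qcube n).induce (daisySet X)) ⟨fun _ => false, h0⟩ d k := by
  have hset : ∀ k d : ℕ,
      {S : Set ↥(daisySet X) |
        Nonempty (((Qcube n).induce (daisySet X)).induce S ≃g Qcube k) ∧
        distToSet ((Qcube n).induce (daisySet X)) ⟨fun _ => false, h0⟩ S = d}
      = DP.Akd X k d := by
    intro k d
    ext S
    exact DP.setP_iff h0 k d S
  unfold distCubeCount
  rw [hset k d, hset d k]
  have hbij : Set.BijOn (DP.Fmap (daisySet X)) (DP.Akd X k d) (DP.Akd X d k) :=
    ⟨fun S hS => DP.Fmap_maps hS,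
     fun S1 h1 S2 h2 he => by rw [← DP.Fmap_invol h1, ← DP.Fmap_invol h2, he],
     fun T hT => ⟨DP.Fmap (daisySet X) T, DP.Fmap_maps hT, DP.Fmap_invol hT⟩⟩
  rw [← Set.ncard_image_of_injOn hbij.injOn, hbij.image_eq]
end

section
/- For every n ≥ 1, the distance cube polynomial of the Fibonacci cube Γ_n with respect to the vertex 0^n satisfies D_{Γ_n,0^n}(x,y) = Σ_{a=0}^{⌊(n+1)/2⌋} binom(n−a+1, a) (x + y)^a; equivalently, for all k, d ≥ 0 the number of induced k-cubes of Γ_n at distance d from 0^n equals binom(n−k−d+1, k+d) · binom(k+d, d). -/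
open Finset


def fibSet (n : ℕ) : Set (Fin n → Bool) :=
  {u | ∀ i j : Fin n, (j : ℕ) = (i : ℕ) + 1 → ¬(u i = true ∧ u j = true)}

lemma zero_mem_fibSet (n : ℕ) : (fun _ => false) ∈ fibSet n := by
  intro i j _ h
  simp at h


def supp {n : ℕ} (u : Fin n → Bool) : Finset (Fin n) := Finset.univ.filter (fun i => u i = true)

def bxor {n : ℕ} (c : Fin n → Bool) (T : Finset (Fin n)) : Fin n → Bool :=
  fun j => xor (c j) (decide (j ∈ T))

lemma mem_supp {n : ℕ} {u : Fin n → Bool} {i : Fin n} : i ∈ supp u ↔ u i = true := by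
  simp [supp]

lemma bxor_supp_zero {n : ℕ} (x : Fin n → Bool) : bxor (fun _ => false) (supp x) = x := by
  funext j; simp [bxor, supp]

lemma bxor_inj {n : ℕ} {c : Fin n → Bool} {A B : Finset (Fin n)} (h : bxor c A = bxor c B) :
    A = B := by
  ext j
  have := congrFun h j
  simp only [bxor] at this
  rcases Bool.eq_false_or_eq_true (c j) with hc | hc <;> simp [hc] at this <;>
    simp [this]

lemma hamming_eq_card {n : ℕ} (u v : Fin n → Bool) :
    hammingDist u v = (Finset.univ.filter fun j => u j ≠ v j).card := rfl

lemma hamming_bxor {n : ℕ} (c : Fin n → Bool) (A B : Finset (Fin n)) :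
    hammingDist (bxor c A) (bxor c B) = (symmDiff A B).card := by
  rw [hamming_eq_card]
  congr 1
  ext j
  simp only [Finset.mem_filter, Finset.mem_univ, true_and, bxor, Finset.mem_symmDiff]
  rcases Bool.eq_false_or_eq_true (c j) with hc | hc <;> by_cases hA : j ∈ A <;> by_cases hB : j ∈ B <;>
    simp [hc, hA, hB]

lemma hamming_supp {n : ℕ} (x y : Fin n → Bool) :
    hammingDist x y = (symmDiff (supp x) (supp y)).card := by
  conv_lhs => rw [← bxor_supp_zero x, ← bxor_supp_zero y]
  exact hamming_bxor _ _ _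

variable {n k : ℕ}


lemma bxor_bxor (c : Fin n → Bool) (A B : Finset (Fin n)) :
    bxor (bxor c A) B = bxor c (symmDiff A B) := by
  funext j
  by_cases hA : j ∈ A <;> by_cases hB : j ∈ B <;>
    simp [bxor, hA, hB, Finset.mem_symmDiff, Bool.xor_assoc]

lemma eq_bxor_diff (u v : Fin n → Bool) :
    v = bxor u (Finset.univ.filter fun j => u j ≠ v j) := by
  funext j
  by_cases h : u j = v j
  · simp [bxor, h]
  · cases hu : u j <;> cases hv : v j <;> simp [bxor, hu, hv] <;> simp [hu, hv] at h

lemma exists_single_of_hamming_one {u v : Fin n → Bool} (h : hammingDist u v = 1) :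
    ∃ j, v = bxor u {j} := by
  have hd : (Finset.univ.filter fun j => u j ≠ v j).card = 1 := h
  obtain ⟨j, hj⟩ := Finset.card_eq_one.mp hd
  exact ⟨j, by rw [eq_bxor_diff u v, hj]⟩

-- symmDiff helpers
lemma symmDiff_erase_self {α : Type*} [DecidableEq α] {s : Finset α} {a : α} (ha : a ∈ s) :
    symmDiff s (s.erase a) = {a} := by
  ext x
  simp only [Finset.mem_symmDiff, Finset.mem_erase, Finset.mem_singleton]
  constructor
  · rintro (⟨hx, hx2⟩ | ⟨⟨_, _⟩, h⟩)
    · by_contra hne; exact hx2 ⟨hne, hx⟩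
    · tauto
  · rintro rfl; exact Or.inl ⟨ha, fun h => h.1 rfl⟩

lemma symmDiff_erase_erase {α : Type*} [DecidableEq α] {s : Finset α} {a b : α}
    (ha : a ∈ s) (hb : b ∈ s) (hab : a ≠ b) :
    symmDiff (s.erase a) (s.erase b) = {a, b} := by
  ext x
  simp only [Finset.mem_symmDiff, Finset.mem_erase, Finset.mem_insert, Finset.mem_singleton]
  rcases eq_or_ne x a with rfl | hxa <;> rcases eq_or_ne x b with rfl | hxb <;>
    simp_all

lemma symmDiff_single_mem {α : Type*} [DecidableEq α] {t : Finset α} {b : α} (hb : b ∈ t) :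
    symmDiff t {b} = t.erase b := by
  ext x
  simp only [Finset.mem_symmDiff, Finset.mem_singleton, Finset.mem_erase]
  constructor
  · rintro (⟨h1, h2⟩ | ⟨rfl, h2⟩)
    · exact ⟨h2, h1⟩
    · exact absurd hb h2
  · rintro ⟨h1, h2⟩; exact Or.inl ⟨h2, h1⟩

lemma symmDiff_erase_single {α : Type*} [DecidableEq α] {t : Finset α} {a : α} (ha : a ∈ t) :
    symmDiff (t.erase a) {a} = t := by
  ext x
  simp only [Finset.mem_symmDiff, Finset.mem_singleton, Finset.mem_erase]
  constructor
  · rintro (⟨⟨_, h⟩, _⟩ | ⟨rfl, _⟩) <;> first | exact h | exact ha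
  · intro hx
    by_cases hxa : x = a
    · exact Or.inr ⟨hxa, fun h => h.1 hxa⟩
    · exact Or.inl ⟨⟨hxa, hx⟩, fun h => hxa h⟩

lemma pair_symmDiff_card_one {α : Type*} [DecidableEq α] {a b j : α} (hab : a ≠ b)
    (h : (symmDiff ({a, b} : Finset α) {j}).card = 1) : j = a ∨ j = b := by
  by_contra hc
  push_neg at hc
  have ha : a ∈ symmDiff ({a, b} : Finset α) {j} := by
    simp [Finset.mem_symmDiff, Ne.symm hc.1, hc]
  have hb : b ∈ symmDiff ({a, b} : Finset α) {j} := by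
    simp [Finset.mem_symmDiff, Ne.symm hc.2, hc]
  have := Finset.one_lt_card.mpr ⟨a, ha, b, hb, hab⟩
  omega

def ebasis (k : ℕ) (i : Fin k) : Fin k → Bool := fun j => decide (j = i)

lemma supp_ebasis (i : Fin k) : supp (ebasis k i) = {i} := by
  ext j; simp [supp, ebasis]

lemma supp_update_false (x : Fin k → Bool) (a : Fin k) :
    supp (Function.update x a false) = (supp x).erase a := by
  ext j
  rcases eq_or_ne j a with rfl | h
  · simp [supp, Function.update_apply]
  · simp [supp, Function.update_apply, h]

lemma qcube_adj {n : ℕ} {u v : Fin n → Bool} : (Qcube n).Adj u v ↔ hammingDist u v = 1 :=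
  Iff.rfl

lemma induce_adj {n : ℕ} {S : Set (Fin n → Bool)} {a b : ↥S} :
    ((Qcube n).induce S).Adj a b ↔ hammingDist a.val b.val = 1 := Iff.rfl

lemma subcube_of_iso {n k : ℕ} {S : Set (Fin n → Bool)}
    (φ : Qcube k ≃g (Qcube n).induce S) :
    ∃ (b : Fin n → Bool) (F : Finset (Fin n)), F.card = k ∧
      S = {u | ∀ j, j ∉ F → u j = b j} := by
  classical
  set z : Fin k → Bool := fun _ => false with hz
  set b : Fin n → Bool := (φ z).val with hb
  have hsz : supp z = ∅ := by ext j; simp [supp, hz]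
  have hadj : ∀ i : Fin k, hammingDist b ((φ (ebasis k i)).val) = 1 := by
    intro i
    have h1 : (Qcube k).Adj z (ebasis k i) := by
      rw [qcube_adj, hamming_supp, hsz, supp_ebasis]
      have : symmDiff (∅ : Finset (Fin k)) {i} = {i} := by
        ext t; simp [Finset.mem_symmDiff]
      rw [this]
      simp
    exact (induce_adj.mp (φ.map_adj_iff.mpr h1))
  choose f hf using fun i => exists_single_of_hamming_one (hadj i)
  have hfinj : Function.Injective f := by
    intro i i' h
    have h2 : (φ (ebasis k i)) = (φ (ebasis k i')) := Subtype.ext (by rw [hf i, hf i', h])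
    have h3 := φ.injective h2
    have hi := congrFun h3 i
    simp [ebasis] at hi
    exact hi
  have key : ∀ m (x : Fin k → Bool), (supp x).card = m →
      (φ x).val = bxor b ((supp x).image f) := by
    intro m
    induction m using Nat.strong_induction_on with
    | _ m ih =>
      intro x hx
      rcases Nat.lt_or_ge m 2 with hm | hm
      · interval_cases m
        · have hxe : supp x = ∅ := Finset.card_eq_zero.mp hx
          have hxz : x = z := by
            funext j
            have hj : j ∉ supp x := by rw [hxe]; simp
            rw [mem_supp] at hj
            simp only [hz]
            exact Bool.eq_false_iff.mpr hj
          rw [hxz, hsz]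
          funext j
          simp [bxor, hb]
        · obtain ⟨i, hi⟩ := Finset.card_eq_one.mp hx
          have hxe : x = ebasis k i := by
            funext j
            have hj : j ∈ supp x ↔ j = i := by rw [hi]; simp
            rw [mem_supp] at hj
            rcases eq_or_ne j i with rfl | hne
            · simp [ebasis, hj.mpr rfl]
            · simp [ebasis, hne]
              cases hxj : x j
              · rfl
              · exact absurd (hj.mp hxj) hne
          rw [hxe, hf i, supp_ebasis, Finset.image_singleton]
      · obtain ⟨a, ha, a', ha', haa⟩ := Finset.one_lt_card.mp (by omega : 1 < (supp x).card)
        set T := (supp x).image f with hT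
        have hfa : f a ∈ T := Finset.mem_image_of_mem f ha
        have hfa' : f a' ∈ T := Finset.mem_image_of_mem f ha'
        have hfaa : f a ≠ f a' := fun h => haa (hfinj h)
        set xa := Function.update x a false with hxa
        set xb := Function.update x a' false with hxb
        set xab := Function.update xa a' false with hxab
        have hsa : supp xa = (supp x).erase a := supp_update_false x a
        have hsb : supp xb = (supp x).erase a' := supp_update_false x a'
        have hsab : supp xab = ((supp x).erase a).erase a' := by
          rw [hxab, supp_update_false, hsa]
        have hia : (φ xa).val = bxor b (T.erase (f a)) := by
          rw [ih (m-1) (by omega) xa (by rw [hsa, Finset.card_erase_of_mem ha, hx]), hsa,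
            Finset.image_erase hfinj]
        have hib : (φ xb).val = bxor b (T.erase (f a')) := by
          rw [ih (m-1) (by omega) xb (by rw [hsb, Finset.card_erase_of_mem ha', hx]), hsb,
            Finset.image_erase hfinj]
        have hiab : (φ xab).val = bxor b ((T.erase (f a)).erase (f a')) := by
          rw [ih (m-2) (by omega) xab ?_, hsab, Finset.image_erase hfinj,
            Finset.image_erase hfinj]
          rw [hsab, Finset.card_erase_of_mem (Finset.mem_erase.mpr ⟨Ne.symm haa, ha'⟩),
            Finset.card_erase_of_mem ha, hx]
          omega
        have hadja : hammingDist (bxor b (T.erase (f a))) ((φ x).val) = 1 := by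
          rw [← hia, hammingDist_comm]
          refine induce_adj.mp (φ.map_adj_iff.mpr ?_)
          rw [qcube_adj, hamming_supp, hsa, symmDiff_erase_self ha]
          simp
        have hadjb : hammingDist ((φ x).val) (bxor b (T.erase (f a'))) = 1 := by
          rw [← hib]
          refine induce_adj.mp (φ.map_adj_iff.mpr ?_)
          rw [qcube_adj, hamming_supp, hsb, symmDiff_erase_self ha']
          simp
        obtain ⟨j, hj⟩ := exists_single_of_hamming_one hadja
        rw [hj, bxor_bxor] at hadjb ⊢
        rw [hamming_bxor] at hadjb
        have hsym : symmDiff (symmDiff (T.erase (f a)) {j}) (T.erase (f a')) =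
            symmDiff (symmDiff (T.erase (f a)) (T.erase (f a'))) {j} := by
          rw [symmDiff_assoc, symmDiff_comm ({j} : Finset (Fin n)), ← symmDiff_assoc]
        rw [hsym, symmDiff_erase_erase hfa hfa' hfaa] at hadjb
        rcases pair_symmDiff_card_one hfaa hadjb with h | h
        · subst h
          rw [symmDiff_erase_single hfa]
        · exfalso
          subst h
          have heq : (φ x).val = (φ xab).val := by
            rw [hj, bxor_bxor,
              symmDiff_single_mem (Finset.mem_erase.mpr ⟨Ne.symm hfaa, hfa'⟩), ← hiab]
          have hxeq := φ.injective (Subtype.ext heq)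
          have hxa2 : x a = true := mem_supp.mp ha
          rw [hxeq] at hxa2
          simp [hxab, hxa, Function.update_apply, haa] at hxa2
  -- conclude
  refine ⟨b, Finset.univ.image f, ?_, ?_⟩
  · rw [Finset.card_image_of_injective _ hfinj, Finset.card_univ, Fintype.card_fin]
  · ext u
    constructor
    · intro hu
      have hval : (φ (φ.symm ⟨u, hu⟩)).val = u := by rw [φ.apply_symm_apply]
      rw [← hval, key _ _ rfl]
      intro j hj
      have hjT : j ∉ (supp (φ.symm ⟨u, hu⟩ : Fin k → Bool)).image f := fun h =>
        hj (Finset.image_subset_image (Finset.subset_univ _) h)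
      simp [bxor, hjT]
    · intro hu
      set T := (Finset.univ.image f).filter (fun j => ¬ u j = b j) with hT
      set x : Fin k → Bool := fun i => decide (f i ∈ T) with hxd
      have hsx : (supp x).image f = T := by
        ext j
        simp only [Finset.mem_image, mem_supp, hxd, decide_eq_true_eq]
        constructor
        · rintro ⟨i, hi, rfl⟩; exact hi
        · intro hj
          have hjf : j ∈ Finset.univ.image f := Finset.filter_subset _ _ hj
          obtain ⟨i, _, rfl⟩ := Finset.mem_image.mp hjf
          exact ⟨i, hj, rfl⟩
      have hxval : (φ x).val = u := by
        rw [key _ x rfl, hsx]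
        funext j
        by_cases hj : j ∈ Finset.univ.image f
        · by_cases hub : u j = b j
          · have hjT2 : j ∉ T := by simp [hT, hub]
            simp [bxor, hjT2, hub]
          · have hjT2 : j ∈ T := Finset.mem_filter.mpr ⟨hj, hub⟩
            show xor (b j) (decide (j ∈ T)) = u j
            rw [decide_eq_true hjT2]
            cases hbj : b j <;> cases huj : u j <;> simp [hbj, huj] at hub ⊢
        · have hjT2 : j ∉ T := fun h2 => hj (Finset.filter_subset _ _ h2)
          simp [bxor, hjT2, hu j hj]
      rw [← hxval]
      exact (φ x).2

lemma hamming_restrict {n k : ℕ} (F : Finset (Fin n)) (hF : F.card = k)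
    (b u v : Fin n → Bool) (hu : ∀ j, j ∉ F → u j = b j) (hv : ∀ j, j ∉ F → v j = b j) :
    hammingDist (fun i => u ((F.orderIsoOfFin hF) i).val) (fun i => v ((F.orderIsoOfFin hF) i).val)
      = hammingDist u v := by
  rw [hamming_eq_card, hamming_eq_card]
  refine Finset.card_bij (fun a _ => ((F.orderIsoOfFin hF) a).val) ?_ ?_ ?_
  · intro a ha
    simp only [Finset.mem_filter, Finset.mem_univ, true_and] at ha ⊢
    exact ha
  · intro a _ a' _ h
    exact (F.orderIsoOfFin hF).injective (Subtype.ext h)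
  · intro j hj
    simp only [Finset.mem_filter, Finset.mem_univ, true_and] at hj
    have hjF : j ∈ F := by
      by_contra hc
      exact hj (by rw [hu j hc, hv j hc])
    refine ⟨(F.orderIsoOfFin hF).symm ⟨j, hjF⟩, ?_, ?_⟩
    · simp only [Finset.mem_filter, Finset.mem_univ, true_and]
      rw [OrderIso.apply_symm_apply]
      exact hj
    · show ((F.orderIsoOfFin hF) ((F.orderIsoOfFin hF).symm ⟨j, hjF⟩)).val = j
      rw [OrderIso.apply_symm_apply]

lemma iso_of_subcube {n k : ℕ} (b : Fin n → Bool) (F : Finset (Fin n)) (hF : F.card = k) :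
    Nonempty ((Qcube n).induce {u | ∀ j, j ∉ F → u j = b j} ≃g Qcube k) := by
  classical
  set g := F.orderIsoOfFin hF with hg
  refine ⟨⟨⟨fun u => fun i => u.val (g i).val,
    fun x => ⟨fun j => if h : j ∈ F then x (g.symm ⟨j, h⟩) else b j, fun j hj => dif_neg hj⟩,
    ?_, ?_⟩, ?_⟩⟩
  · intro u
    apply Subtype.ext
    funext j
    by_cases h : j ∈ F
    · simp only [dif_pos h]
      congr 1
      have : g (g.symm ⟨j, h⟩) = ⟨j, h⟩ := g.apply_symm_apply _
      rw [this]
    · simpa [dif_neg h] using (u.2 j h).symm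
  · intro x
    funext i
    simp only []
    rw [dif_pos (g i).2]
    congr 1
    have : (⟨(g i).val, (g i).2⟩ : {y // y ∈ F}) = g i := rfl
    rw [this, g.symm_apply_apply]
  · intro u v
    show hammingDist (fun i => u.val (g i).val) (fun i => v.val (g i).val) = 1
      ↔ hammingDist u.val v.val = 1
    rw [hg, hamming_restrict F hF b u.val v.val u.2 v.2]

lemma symmDiff_empty_left {α : Type*} [DecidableEq α] (s : Finset α) :
    symmDiff (∅ : Finset α) s = s := by ext x; simp [Finset.mem_symmDiff]

lemma fib_downward {n : ℕ} {u v : Fin n → Bool} (h : ∀ i, u i = true → v i = true)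
    (hv : v ∈ fibSet n) : u ∈ fibSet n := by
  intro i j hij hc
  exact hv i j hij ⟨h i hc.1, h j hc.2⟩

lemma walk_lower {n : ℕ} {a c : ↥(fibSet n)}
    (w : ((Qcube n).induce (fibSet n)).Walk a c) : hammingDist a.val c.val ≤ w.length := by
  induction w with
  | nil => simp [hammingDist_self]
  | @cons u v t h' p' ih =>
    have h1 : hammingDist u.val v.val = 1 := h'
    have := hammingDist_triangle u.val v.val t.val
    rw [SimpleGraph.Walk.length_cons]
    omega

abbrev zeroFib (n : ℕ) : ↥(fibSet n) := ⟨fun _ => false, zero_mem_fibSet n⟩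

lemma walk_from_zero {n : ℕ} : ∀ (m : ℕ) (v : ↥(fibSet n)), (supp v.val).card = m →
    ∃ w : ((Qcube n).induce (fibSet n)).Walk (zeroFib n) v, w.length = m := by
  intro m
  induction m with
  | zero =>
    intro v hv
    have : v = zeroFib n := by
      apply Subtype.ext
      funext j
      have : j ∉ supp v.val := by rw [Finset.card_eq_zero.mp hv]; exact Finset.notMem_empty j
      rw [mem_supp] at this
      exact Bool.eq_false_iff.mpr this
    subst this
    exact ⟨SimpleGraph.Walk.nil, rfl⟩
  | succ m ih =>
    intro v hv
    have hne : (supp v.val).Nonempty := Finset.card_pos.mp (by omega)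
    obtain ⟨i, hi⟩ := hne
    set v' : Fin n → Bool := Function.update v.val i false with hv'
    have hv'fib : v' ∈ fibSet n := by
      refine fib_downward (fun j hj => ?_) v.2
      rcases eq_or_ne j i with rfl | h
      · rw [hv', Function.update_self] at hj; exact absurd hj (by simp)
      · rwa [hv', Function.update_of_ne h] at hj
    have hsv' : supp v' = (supp v.val).erase i := supp_update_false v.val i
    obtain ⟨w, hw⟩ := ih ⟨v', hv'fib⟩ (by rw [hsv', Finset.card_erase_of_mem hi, hv]; omega)
    have hadj : ((Qcube n).induce (fibSet n)).Adj ⟨v', hv'fib⟩ v := by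
      show hammingDist v' v.val = 1
      rw [hamming_supp, hsv', symmDiff_comm, symmDiff_erase_self hi]
      simp
    exact ⟨w.concat hadj, by rw [SimpleGraph.Walk.length_concat, hw]⟩

lemma dist_zero_fib {n : ℕ} (v : ↥(fibSet n)) :
    ((Qcube n).induce (fibSet n)).dist (zeroFib n) v = (supp v.val).card := by
  obtain ⟨w, hw⟩ := walk_from_zero (supp v.val).card v rfl
  refine le_antisymm (hw ▸ SimpleGraph.dist_le w) ?_
  obtain ⟨p, hp⟩ := SimpleGraph.Reachable.exists_walk_length_eq_dist ⟨w⟩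
  calc (supp v.val).card = hammingDist (zeroFib n).val v.val := by
        rw [hamming_supp]
        have : supp (zeroFib n).val = ∅ := by ext j; simp [supp, zeroFib]
        rw [this, symmDiff_empty_left]
    _ ≤ p.length := walk_lower p
    _ = _ := hp

open Classical in
noncomputable def gcount (n a : ℕ) : ℕ :=
  ((Finset.range n).powerset.filter (fun s => s.card = a ∧ ∀ x ∈ s, x + 1 ∉ s)).card

open Classical in
lemma gcount_zero (n : ℕ) : gcount n 0 = 1 := by
  rw [gcount]
  convert Finset.card_singleton (∅ : Finset ℕ) using 2
  ext s
  simp only [Finset.mem_filter, Finset.mem_powerset, Finset.card_eq_zero, Finset.mem_singleton]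
  constructor
  · rintro ⟨_, rfl, _⟩; rfl
  · rintro rfl; simp

open Classical in
lemma gcount_big {n a : ℕ} (h : n < a) : gcount n a = 0 := by
  rw [gcount, Finset.card_eq_zero]
  ext s
  simp only [Finset.mem_filter, Finset.mem_powerset, Finset.notMem_empty, iff_false, not_and]
  intro hs hc
  exfalso
  have := Finset.card_le_card hs
  rw [hc, Finset.card_range] at this
  omega

open Classical in
lemma gcount_one_one : gcount 1 1 = 1 := by
  rw [gcount, Finset.card_eq_one]
  refine ⟨{0}, ?_⟩
  ext s
  simp only [Finset.mem_filter, Finset.mem_powerset, Finset.mem_singleton]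
  constructor
  · rintro ⟨hs, hc, _⟩
    obtain ⟨x, rfl⟩ := Finset.card_eq_one.mp hc
    have := hs (Finset.mem_singleton_self x)
    simp at this
    rw [this]
  · rintro rfl
    refine ⟨by simp, by simp, ?_⟩
    intro x hx
    simp at hx
    subst hx
    simp

open Classical in
lemma gcount_rec (m a : ℕ) (ha : 1 ≤ a) :
    gcount (m + 2) a = gcount (m + 1) a + gcount m (a - 1) := by
  rw [gcount, gcount, gcount]
  rw [← Finset.card_filter_add_card_filter_not
    (p := fun s : Finset ℕ => m + 1 ∈ s), Nat.add_comm]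
  congr 1
  swap
  ·
    refine Finset.card_bij' (fun s _ => s.erase (m + 1)) (fun t _ => insert (m + 1) t) ?_ ?_ ?_ ?_
    · intro s hs
      simp only [Finset.mem_filter, Finset.mem_powerset] at hs ⊢
      obtain ⟨⟨hsub, hcard, hsp⟩, hmem⟩ := hs
      refine ⟨?_, ?_, ?_⟩
      · intro x hx
        rw [Finset.mem_erase] at hx
        have h1 := hsub hx.2
        rw [Finset.mem_range] at h1 ⊢
        have hxm : x ≠ m := by
          rintro rfl
          exact hsp x hx.2 (by simpa using hmem)
        omega
      · rw [Finset.card_erase_of_mem hmem, hcard]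
      · intro x hx
        rw [Finset.mem_erase] at hx
        intro hc
        exact hsp x hx.2 (Finset.mem_of_mem_erase hc)
    · intro t ht
      simp only [Finset.mem_filter, Finset.mem_powerset] at ht ⊢
      obtain ⟨hsub, hcard, hsp⟩ := ht
      have hnm : m + 1 ∉ t := fun h => by have := hsub h; rw [Finset.mem_range] at this; omega
      refine ⟨⟨?_, ?_, ?_⟩, Finset.mem_insert_self _ _⟩
      · intro x hx
        rw [Finset.mem_insert] at hx
        rcases hx with rfl | hx
        · simp
        · have := hsub hx; rw [Finset.mem_range] at this ⊢; omega
      · rw [Finset.card_insert_of_notMem hnm, hcard]; omega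
      · intro x hx hc
        rw [Finset.mem_insert] at hx hc
        rcases hx with rfl | hx
        · rcases hc with hc | hc
          · omega
          · have := hsub hc; rw [Finset.mem_range] at this; omega
        · rcases hc with hc | hc
          · have := hsub hx; rw [Finset.mem_range] at this; omega
          · exact hsp x hx hc
    · intro s hs
      simp only [Finset.mem_filter] at hs
      exact Finset.insert_erase hs.2
    · intro t ht
      simp only [Finset.mem_filter, Finset.mem_powerset] at ht
      have hnm : m + 1 ∉ t := fun h => by have := ht.1 h; rw [Finset.mem_range] at this; omega
      exact Finset.erase_insert hnm
  · -- not contains m+1 ↦ gcount (m+1) a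
    congr 1
    ext s
    simp only [Finset.mem_filter, Finset.mem_powerset]
    constructor
    · rintro ⟨⟨hsub, hp⟩, hmem⟩
      refine ⟨fun x hx => ?_, hp⟩
      have := hsub hx
      rw [Finset.mem_range] at this ⊢
      have : x ≠ m + 1 := fun h => hmem (h ▸ hx)
      omega
    · rintro ⟨hsub, hp⟩
      have hmem : m + 1 ∉ s := fun h => by have := hsub h; simp at this
      refine ⟨⟨fun x hx => ?_, hp⟩, hmem⟩
      have := hsub hx
      rw [Finset.mem_range] at this ⊢
      omega

lemma gcount_eq (n a : ℕ) : gcount n a = if a = 0 then 1 else (n + 1 - a).choose a := by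
  induction n using Nat.strong_induction_on generalizing a with
  | _ n ih =>
    rcases Nat.eq_zero_or_pos a with rfl | ha
    · simp [gcount_zero]
    match n with
    | 0 =>
      rw [gcount_big ha]
      rw [if_neg (by omega)]
      exact (Nat.choose_eq_zero_of_lt (by omega)).symm
    | 1 =>
      rcases Nat.eq_or_lt_of_le ha with rfl | ha2
      · rw [gcount_one_one, if_neg (by omega)]
        simp
      · rw [gcount_big (by omega), if_neg (by omega)]
        exact (Nat.choose_eq_zero_of_lt (by omega)).symm
    | (m + 2) =>
      rw [if_neg (by omega), gcount_rec m a (by omega), ih (m+1) (by omega), ih m (by omega),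
        if_neg (by omega)]
      obtain ⟨c, rfl⟩ : ∃ c, a = c + 1 := ⟨a - 1, by omega⟩
      simp only [Nat.add_sub_cancel]
      rcases Nat.eq_zero_or_pos c with rfl | hc
      · simp [Nat.choose_one_right]
      · rw [if_neg (by omega)]
        rcases Nat.lt_or_ge (m + 1) c with hbig | hle
        · rw [Nat.choose_eq_zero_of_lt (by omega), Nat.choose_eq_zero_of_lt (by omega),
            Nat.choose_eq_zero_of_lt (by omega)]
        · have h1 : m + 2 + 1 - (c + 1) = (m + 1 + 1 - (c + 1)) + 1 := by omega
          have h2 : m + 1 - c = m + 1 + 1 - (c + 1) := by omega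
          rw [h1, h2, Nat.choose_succ_succ]
          simp only [Nat.succ_eq_add_one]
          omega

open Classical in
noncomputable def fibWeight (n a : ℕ) : Finset (Fin n → Bool) :=
  Finset.univ.filter (fun w => w ∈ fibSet n ∧ (supp w).card = a)

lemma image_supp_decide {n : ℕ} (t : Finset ℕ) (ht : t ⊆ Finset.range n) :
    (supp (fun i : Fin n => decide (i.val ∈ t))).image Fin.val = t := by
  ext x
  simp only [Finset.mem_image, mem_supp, decide_eq_true_eq]
  constructor
  · rintro ⟨i, hi, rfl⟩; exact hi
  · intro hx
    have hlt := ht hx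
    rw [Finset.mem_range] at hlt
    exact ⟨⟨x, hlt⟩, hx, rfl⟩

open Classical in
lemma fibWeight_card (n a : ℕ) : (fibWeight n a).card = gcount n a := by
  rw [fibWeight, gcount]
  refine Finset.card_bij' (fun w _ => (supp w).image Fin.val)
    (fun t _ => fun i : Fin n => decide (i.val ∈ t)) ?_ ?_ ?_ ?_
  · intro w hw
    simp only [Finset.mem_filter, Finset.mem_univ, true_and] at hw
    obtain ⟨hfib, hcard⟩ := hw
    simp only [Finset.mem_filter, Finset.mem_powerset]
    refine ⟨?_, ?_, ?_⟩
    · intro x hx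
      obtain ⟨i, _, rfl⟩ := Finset.mem_image.mp hx
      rw [Finset.mem_range]
      exact i.2
    · rw [Finset.card_image_of_injective _ Fin.val_injective, hcard]
    · intro x hx hc
      obtain ⟨i, hi, rfl⟩ := Finset.mem_image.mp hx
      obtain ⟨j, hj, hji⟩ := Finset.mem_image.mp hc
      exact hfib i j hji ⟨mem_supp.mp hi, mem_supp.mp hj⟩
  · intro t ht
    simp only [Finset.mem_filter, Finset.mem_powerset] at ht
    obtain ⟨hsub, hcard, hsp⟩ := ht
    simp only [Finset.mem_filter, Finset.mem_univ, true_and]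
    constructor
    · intro i j hij hc
      simp only [decide_eq_true_eq] at hc
      rw [hij] at hc
      exact hsp i.val hc.1 hc.2
    · rw [← Finset.card_image_of_injective (supp _) Fin.val_injective,
        image_supp_decide t hsub, hcard]
  · intro w hw
    funext i
    have hiff : i.val ∈ (supp w).image Fin.val ↔ w i = true := by
      simp only [Finset.mem_image, mem_supp]
      constructor
      · rintro ⟨j, hj, hji⟩
        rwa [Fin.val_injective hji] at hj
      · intro h; exact ⟨i, h, rfl⟩
    cases h : w i
    · simp [hiff, h]
    · simp [hiff, h]
  · intro t ht
    simp only [Finset.mem_filter, Finset.mem_powerset] at ht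
    exact image_supp_decide t ht.1

lemma induce_val_iso {n : ℕ} (S : Set ↥(fibSet n)) :
    Nonempty ((((Qcube n).induce (fibSet n)).induce S) ≃g
      ((Qcube n).induce (Subtype.val '' S))) := by
  refine ⟨⟨Equiv.Set.image Subtype.val S Subtype.val_injective, ?_⟩⟩
  intro a b
  rfl

lemma distToSet_eq {n : ℕ} {S : Set ↥(fibSet n)} {c : ↥(fibSet n)} (hc : c ∈ S)
    (hmin : ∀ v ∈ S, (supp c.val).card ≤ (supp v.val).card) :
    distToSet ((Qcube n).induce (fibSet n)) (zeroFib n) S = (supp c.val).card := by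
  rw [distToSet]
  apply le_antisymm
  · exact Nat.sInf_le ⟨c, hc, dist_zero_fib c⟩
  · have hne : ((((Qcube n).induce (fibSet n)).dist (zeroFib n)) '' S).Nonempty :=
      ⟨_, c, hc, rfl⟩
    obtain ⟨v, hv, heq⟩ := Nat.sInf_mem hne
    rw [← heq, dist_zero_fib v]
    exact hmin v hv

lemma mem_cubeset_iff {n k d : ℕ} (S : Set ↥(fibSet n)) :
    (Nonempty ((((Qcube n).induce (fibSet n)).induce S) ≃g Qcube k) ∧
      distToSet ((Qcube n).induce (fibSet n)) (zeroFib n) S = d)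
    ↔ ∃ w : Fin n → Bool, ∃ D : Finset (Fin n), (w ∈ fibSet n ∧ (supp w).card = k + d) ∧
        (D ⊆ supp w ∧ D.card = d) ∧
        S = {v : ↥(fibSet n) | ∀ j, j ∉ supp w \ D → v.val j = decide (j ∈ D)} := by
  constructor
  · rintro ⟨⟨ψ⟩, hdist⟩
    obtain ⟨tr⟩ := induce_val_iso S
    have φ : Qcube k ≃g (Qcube n).induce (Subtype.val '' S) := (ψ.symm).trans tr
    obtain ⟨b, F, hFcard, hS0⟩ := subcube_of_iso φ
    set c : Fin n → Bool := fun j => if j ∈ F then false else b j with hcdef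
    set t : Fin n → Bool := fun j => if j ∈ F then true else b j with htdef
    have hcS0 : c ∈ Subtype.val '' S := by
      rw [hS0]; intro j hj
      show (if j ∈ F then false else b j) = b j
      rw [if_neg hj]
    have htS0 : t ∈ Subtype.val '' S := by
      rw [hS0]; intro j hj
      show (if j ∈ F then true else b j) = b j
      rw [if_neg hj]
    obtain ⟨cv, hcvS, hcv⟩ := hcS0
    obtain ⟨tv, htvS, htv⟩ := htS0
    set D := supp c with hD
    have hDF : Disjoint D F := by
      rw [Finset.disjoint_left]
      intro j hj hjF
      rw [hD, mem_supp, hcdef] at hj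
      simp [hjF] at hj
    have hcD : ∀ j, c j = decide (j ∈ D) := by
      intro j
      by_cases hjD : j ∈ D
      · rw [decide_eq_true hjD]
        rw [hD] at hjD
        exact mem_supp.mp hjD
      · rw [decide_eq_false hjD]
        cases hcj : c j
        · rfl
        · rw [hD] at hjD
          exact absurd (mem_supp.mpr hcj) hjD
    have hbD : ∀ j, j ∉ F → b j = decide (j ∈ D) := by
      intro j hj
      rw [← hcD j, hcdef]
      simp [hj]
    have hsuppt : supp t = D ∪ F := by
      ext j
      rw [mem_supp, Finset.mem_union, hD, mem_supp, htdef, hcdef]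
      by_cases hj : j ∈ F <;> simp [hj]
    have hmin : ∀ v ∈ S, (supp cv.val).card ≤ (supp v.val).card := by
      intro v hv
      apply Finset.card_le_card
      intro j hj
      rw [hcv] at hj
      have hjnF : j ∉ F := Finset.disjoint_left.mp hDF (hD ▸ hj)
      have hjb : c j = true := mem_supp.mp hj
      rw [hcdef] at hjb
      simp only [if_neg hjnF] at hjb
      have hvS0 : v.val ∈ Subtype.val '' S := Set.mem_image_of_mem _ hv
      rw [hS0] at hvS0
      rw [mem_supp, hvS0 j hjnF, hjb]
    have hDcard : D.card = d := by
      have h2 := distToSet_eq hcvS hmin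
      rw [hdist] at h2
      rw [hD, ← hcv]
      omega
    have hFD : supp t \ D = F := by
      rw [hsuppt]
      ext j
      simp only [Finset.mem_sdiff, Finset.mem_union]
      constructor
      · rintro ⟨hj | hj, hnj⟩
        · exact absurd hj hnj
        · exact hj
      · intro hj
        exact ⟨Or.inr hj, fun hc2 => Finset.disjoint_left.mp hDF hc2 hj⟩
    refine ⟨t, D, ⟨by rw [← htv]; exact tv.2, ?_⟩, ⟨by rw [hsuppt]; exact Finset.subset_union_left, hDcard⟩, ?_⟩
    · rw [hsuppt, Finset.card_union_of_disjoint hDF, hFcard, hDcard]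
      omega
    · ext v
      constructor
      · intro hv j hj
        rw [hFD] at hj
        have hvS0 : v.val ∈ Subtype.val '' S := Set.mem_image_of_mem _ hv
        rw [hS0] at hvS0
        rw [hvS0 j hj, hbD j hj]
      · intro hv
        have hvS0 : v.val ∈ {u : Fin n → Bool | ∀ j, j ∉ F → u j = b j} := by
          intro j hj
          rw [hv j (by rw [hFD]; exact hj), hbD j hj]
        rw [← hS0] at hvS0
        obtain ⟨v', hv'S, hv'eq⟩ := hvS0
        have : v' = v := Subtype.ext hv'eq
        rwa [← this]
  · rintro ⟨w, D, ⟨hwfib, hwcard⟩, ⟨hDsub, hDcard⟩, hSdef⟩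
    set F := supp w \ D with hF
    set c : Fin n → Bool := fun j => decide (j ∈ D) with hcdef
    have hFcard : F.card = k := by
      rw [hF, Finset.card_sdiff_of_subset hDsub, hwcard, hDcard]
      omega
    have hsuppc : supp c = D := by
      ext j
      rw [mem_supp, hcdef]
      simp
    have hcw : ∀ i, c i = true → w i = true := by
      intro i hi
      rw [hcdef, decide_eq_true_eq] at hi
      exact mem_supp.mp (hDsub hi)
    have hcfib : c ∈ fibSet n := fib_downward hcw hwfib
    have hS0sub : ∀ u : Fin n → Bool, (∀ j, j ∉ F → u j = c j) → u ∈ fibSet n := by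
      intro u hu
      refine fib_downward (fun i hi => ?_) hwfib
      by_cases hiF : i ∈ F
      · exact mem_supp.mp (Finset.mem_sdiff.mp (hF ▸ hiF)).1
      · rw [hu i hiF] at hi
        exact hcw i hi
    have hvalS : Subtype.val '' S = {u : Fin n → Bool | ∀ j, j ∉ F → u j = c j} := by
      ext u
      constructor
      · rintro ⟨v, hvS, rfl⟩
        rw [hSdef] at hvS
        intro j hj
        exact hvS j hj
      · intro hu
        refine ⟨⟨u, hS0sub u hu⟩, ?_, rfl⟩
        rw [hSdef]
        intro j hj
        exact hu j hj
    have h1 := induce_val_iso S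
    rw [hvalS] at h1
    obtain ⟨tr⟩ := h1
    obtain ⟨ψk⟩ := iso_of_subcube c F hFcard
    have hcvS : (⟨c, hcfib⟩ : ↥(fibSet n)) ∈ S := by
      rw [hSdef]; intro j hj; rfl
    have hmin : ∀ v ∈ S, (supp c).card ≤ (supp v.val).card := by
      intro v hv
      apply Finset.card_le_card
      intro j hj
      rw [hsuppc] at hj
      have hjF : j ∉ supp w \ D := fun hmem => (Finset.mem_sdiff.mp hmem).2 hj
      rw [hSdef] at hv
      rw [mem_supp, hv j hjF, decide_eq_true hj]
    refine ⟨⟨tr.trans ψk⟩, ?_⟩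
    rw [distToSet_eq hcvS hmin, hsuppc, hDcard]

lemma mk_w_mem {n : ℕ} {w : Fin n → Bool} {D : Finset (Fin n)}
    (hDsub : D ⊆ supp w) :
    ∀ j', j' ∉ supp w \ D → w j' = decide (j' ∈ D) := by
  intro j' hj'
  rw [Finset.mem_sdiff] at hj'
  push_neg at hj'
  by_cases hjD : j' ∈ D
  · rw [decide_eq_true hjD]
    exact mem_supp.mp (hDsub hjD)
  · rw [decide_eq_false hjD]
    have h2 : j' ∉ supp w := fun h => hjD (hj' h)
    rw [mem_supp] at h2
    exact Bool.eq_false_iff.mpr h2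

lemma mk_D_iff {n : ℕ} {w : Fin n → Bool} {D : Finset (Fin n)} (hwfib : w ∈ fibSet n)
    (hDsub : D ⊆ supp w) (j : Fin n) :
    (j ∈ D ↔ ∀ v : ↥(fibSet n),
      (∀ j', j' ∉ supp w \ D → v.val j' = decide (j' ∈ D)) → v.val j = true) ∧
    (j ∈ supp w ↔ ∃ v : ↥(fibSet n),
      (∀ j', j' ∉ supp w \ D → v.val j' = decide (j' ∈ D)) ∧ v.val j = true) := by
  have hcfib : (fun j' => decide (j' ∈ D)) ∈ fibSet n :=
    fib_downward (fun i hi => mem_supp.mp (hDsub (by simpa using hi))) hwfib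
  constructor
  · constructor
    · intro hjD v hv
      have hnot : j ∉ supp w \ D := fun h => (Finset.mem_sdiff.mp h).2 hjD
      rw [hv j hnot, decide_eq_true hjD]
    · intro h
      have := h ⟨fun j' => decide (j' ∈ D), hcfib⟩ (fun j' _ => rfl)
      simpa using this
  · constructor
    · intro hjw
      exact ⟨⟨w, hwfib⟩, mk_w_mem hDsub, mem_supp.mp hjw⟩
    · rintro ⟨v, hv, hvj⟩
      by_cases hjF : j ∈ supp w \ D
      · exact (Finset.mem_sdiff.mp hjF).1
      · rw [hv j hjF, decide_eq_true_eq] at hvj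
        exact hDsub hvj

open Classical in
lemma distCubeCount_fib (n k d : ℕ) :
    distCubeCount ((Qcube n).induce (fibSet n)) (zeroFib n) k d =
      (fibWeight n (k + d)).card * (k + d).choose d := by
  classical
  rw [distCubeCount]
  set mk : (Σ _ : (Fin n → Bool), Finset (Fin n)) → Set ↥(fibSet n) :=
    fun p => {v : ↥(fibSet n) | ∀ j, j ∉ supp p.1 \ p.2 → v.val j = decide (j ∈ p.2)} with hmk
  set I : Finset (Σ _ : (Fin n → Bool), Finset (Fin n)) :=
    (fibWeight n (k+d)).sigma (fun w => (supp w).powersetCard d) with hI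
  have hImem : ∀ p : (Σ _ : (Fin n → Bool), Finset (Fin n)), p ∈ I ↔
      (p.1 ∈ fibSet n ∧ (supp p.1).card = k + d) ∧ (p.2 ⊆ supp p.1 ∧ p.2.card = d) := by
    intro p
    rw [hI, Finset.mem_sigma, fibWeight, Finset.mem_filter, Finset.mem_powersetCard]
    constructor
    · rintro ⟨⟨_, h1, h2⟩, h3, h4⟩; exact ⟨⟨h1, h2⟩, h3, h4⟩
    · rintro ⟨⟨h1, h2⟩, h3, h4⟩; exact ⟨⟨Finset.mem_univ _, h1, h2⟩, h3, h4⟩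
  have hset : {S : Set ↥(fibSet n) |
      Nonempty ((((Qcube n).induce (fibSet n)).induce S) ≃g Qcube k) ∧
      distToSet ((Qcube n).induce (fibSet n)) (zeroFib n) S = d} = mk '' ↑I := by
    ext S
    rw [Set.mem_setOf_eq, mem_cubeset_iff]
    constructor
    · rintro ⟨w, D, ⟨h1, h2⟩, ⟨h3, h4⟩, h5⟩
      exact ⟨⟨w, D⟩, Finset.mem_coe.mpr ((hImem ⟨w, D⟩).mpr ⟨⟨h1, h2⟩, h3, h4⟩), h5.symm⟩
    · rintro ⟨⟨w, D⟩, hp, rfl⟩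
      obtain ⟨⟨h1, h2⟩, h3, h4⟩ := (hImem ⟨w, D⟩).mp (Finset.mem_coe.mp hp)
      exact ⟨w, D, ⟨h1, h2⟩, ⟨h3, h4⟩, rfl⟩
  have hinj : Set.InjOn mk ↑I := by
    rintro ⟨w, D⟩ hp ⟨w', D'⟩ hq heq
    obtain ⟨⟨hwfib, _⟩, hDsub, _⟩ := (hImem ⟨w, D⟩).mp (Finset.mem_coe.mp hp)
    obtain ⟨⟨hw'fib, _⟩, hD'sub, _⟩ := (hImem ⟨w', D'⟩).mp (Finset.mem_coe.mp hq)
    have hiff : ∀ v : ↥(fibSet n),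
        (∀ j', j' ∉ supp w \ D → v.val j' = decide (j' ∈ D)) ↔
        (∀ j', j' ∉ supp w' \ D' → v.val j' = decide (j' ∈ D')) := by
      intro v
      exact Set.ext_iff.mp heq v
    have hDeq : D = D' := by
      ext j
      rw [(mk_D_iff hwfib hDsub j).1, (mk_D_iff hw'fib hD'sub j).1]
      constructor
      · intro h v hv; exact h v ((hiff v).mpr hv)
      · intro h v hv; exact h v ((hiff v).mp hv)
    have hweq : w = w' := by
      funext i
      have hsupp : i ∈ supp w ↔ i ∈ supp w' := by
        rw [(mk_D_iff hwfib hDsub i).2, (mk_D_iff hw'fib hD'sub i).2]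
        constructor
        · rintro ⟨v, hv, hvj⟩; exact ⟨v, (hiff v).mp hv, hvj⟩
        · rintro ⟨v, hv, hvj⟩; exact ⟨v, (hiff v).mpr hv, hvj⟩
      rw [mem_supp, mem_supp] at hsupp
      cases h : w i
      · cases h' : w' i
        · rfl
        · rw [h, h'] at hsupp; simp at hsupp
      · cases h' : w' i
        · rw [h, h'] at hsupp; simp at hsupp
        · rfl
    subst hDeq; subst hweq; rfl
  rw [hset, Set.ncard_image_of_injOn hinj, Set.ncard_coe_finset]
  rw [hI, Finset.card_sigma]
  have hcg : ∀ w ∈ fibWeight n (k+d), ((supp w).powersetCard d).card = (k+d).choose d := by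
    intro w hw
    rw [Finset.card_powersetCard]
    rw [fibWeight, Finset.mem_filter] at hw
    rw [hw.2.2]
  rw [Finset.sum_congr rfl hcg, Finset.sum_const, smul_eq_mul]

lemma distCubeCount_closed (n k d : ℕ) (hn : 1 ≤ n) :
    distCubeCount ((Qcube n).induce (fibSet n)) (zeroFib n) k d =
      (n - (k + d) + 1).choose (k + d) * (k + d).choose d := by
  rw [distCubeCount_fib, fibWeight_card, gcount_eq]
  rcases Nat.eq_zero_or_pos (k + d) with ha | ha
  · obtain ⟨rfl, rfl⟩ : k = 0 ∧ d = 0 := by omega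
    simp
  · rw [if_neg (by omega)]
    rcases le_or_gt (k + d) n with h | h
    · have h2 : n + 1 - (k + d) = n - (k + d) + 1 := by omega
      rw [h2]
    · have h1 : (n + 1 - (k + d)).choose (k + d) = 0 := Nat.choose_eq_zero_of_lt (by omega)
      have h2 : (n - (k + d) + 1).choose (k + d) = 0 := Nat.choose_eq_zero_of_lt (by omega)
      rw [h1, h2]

theorem distCubePolynomial_of_Fibonacci_cube (n : ℕ) (hn : 1 ≤ n) :
    (∀ x y : ℝ,
      ∑ k ∈ Finset.range (2 ^ n + 1), ∑ d ∈ Finset.range (2 ^ n + 1),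
        (distCubeCount ((Qcube n).induce (fibSet n)) ⟨fun _ => false, zero_mem_fibSet n⟩
            k d : ℝ) * x ^ k * y ^ d =
      ∑ a ∈ Finset.range ((n + 1) / 2 + 1), ((n - a + 1).choose a : ℝ) * (x + y) ^ a)
    ∧ ∀ k d : ℕ,
      distCubeCount ((Qcube n).induce (fibSet n)) ⟨fun _ => false, zero_mem_fibSet n⟩ k d =
        (n - (k + d) + 1).choose (k + d) * (k + d).choose d := by
  have hcount : ∀ k d : ℕ,
      distCubeCount ((Qcube n).induce (fibSet n)) ⟨fun _ => false, zero_mem_fibSet n⟩ k d =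
        (n - (k + d) + 1).choose (k + d) * (k + d).choose d :=
    fun k d => distCubeCount_closed n k d hn
  refine ⟨?_, hcount⟩
  intro x y
  simp only [hcount, Nat.cast_mul]
  have hA2 : (n + 1) / 2 ≤ 2 ^ n := by
    have h2 : n < 2 ^ n := Nat.lt_two_pow_self
    omega
  rw [← Finset.sum_product'
    (f := fun k d => (((n - (k + d) + 1).choose (k + d) : ℝ) * ((k + d).choose d : ℝ))
      * x ^ k * y ^ d)]
  rw [← Finset.sum_subset
    (Finset.filter_subset (fun p : ℕ × ℕ => p.1 + p.2 ≤ (n + 1) / 2)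
      (Finset.range (2 ^ n + 1) ×ˢ Finset.range (2 ^ n + 1)))
    (by
      intro p hmem hp
      have hgt : ¬ (p.1 + p.2 ≤ (n + 1) / 2) := fun hle => hp (Finset.mem_filter.mpr ⟨hmem, hle⟩)
      have hz : (n - (p.1 + p.2) + 1).choose (p.1 + p.2) = 0 :=
        Nat.choose_eq_zero_of_lt (by omega)
      rw [hz]
      simp)]
  have hRHS : ∑ a ∈ Finset.range ((n + 1) / 2 + 1), ((n - a + 1).choose a : ℝ) * (x + y) ^ a
      = ∑ q ∈ (Finset.range ((n + 1) / 2 + 1)).sigma (fun a => Finset.range (a + 1)),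
          ((n - q.1 + 1).choose q.1 : ℝ) * (x ^ q.2 * y ^ (q.1 - q.2) * (q.1.choose q.2 : ℝ)) := by
    rw [Finset.sum_sigma]
    apply Finset.sum_congr rfl
    intro a _
    rw [add_pow, Finset.mul_sum]
  rw [hRHS]
  refine Finset.sum_nbij' (fun p => ⟨p.1 + p.2, p.1⟩) (fun q => (q.2, q.1 - q.2))
    ?_ ?_ ?_ ?_ ?_
  · rintro ⟨k0, d0⟩ hp
    rw [Finset.mem_filter, Finset.mem_product, Finset.mem_range, Finset.mem_range] at hp
    rw [Finset.mem_sigma, Finset.mem_range, Finset.mem_range]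
    dsimp only at hp ⊢
    omega
  · rintro ⟨a0, m0⟩ hq
    rw [Finset.mem_sigma, Finset.mem_range, Finset.mem_range] at hq
    rw [Finset.mem_filter, Finset.mem_product, Finset.mem_range, Finset.mem_range]
    dsimp only at hq ⊢
    omega
  · rintro ⟨k0, d0⟩ _
    dsimp only
    have h1 : k0 + d0 - k0 = d0 := by omega
    rw [h1]
  · rintro ⟨a0, m0⟩ hq
    rw [Finset.mem_sigma, Finset.mem_range, Finset.mem_range] at hq
    dsimp only at hq ⊢
    refine Sigma.ext ?_ (heq_of_eq rfl)
    dsimp only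
    omega
  · rintro ⟨k0, d0⟩ hp
    rw [Finset.mem_filter, Finset.mem_product] at hp
    dsimp only
    have h1 : k0 + d0 - k0 = d0 := by omega
    have h2 : (k0 + d0).choose k0 = (k0 + d0).choose d0 := by
      rw [← Nat.choose_symm (by omega : k0 ≤ k0 + d0), h1]
    rw [h1, h2]
    ring
end
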